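/- Let A and B be disjoint vertex sets with A nonempty, let H be the complete bipartite graph with parts A and B, and let G be any graph on A ∪ B. If the graph H ∪ G contains a Hamilton cycle, then the induced subgraph G[B] of G on the vertex set B has at most |A| connected components. -/

import Mathlib

/-- Let `A` and `B` be disjoint vertex sets with `A` nonempty (whose union is the whole
vertex set), let `H` be the complete bipartite graph with parts `A` and `B`, and let `G` be
any graph on `A ∪ B`.  If `H ∪ G` contains a Hamilton cycle, then the induced subgraph
`G[B]` has at most `|A|` connected components. -/
theorem stmt16 {V : Type*} [Fintype V] [DecidableEq V] (A B : Set V)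
    (hA : A.Nonempty)
    (hdisj : Disjoint A B) (hunion : A ∪ B = Set.univ)
    (H G : SimpleGraph V)
    (hH : ∀ u v : V, H.Adj u v ↔ ((u ∈ A ∧ v ∈ B) ∨ (u ∈ B ∧ v ∈ A)))
    (ham : ∃ (v : V) (w : (H ⊔ G).Walk v v), w.IsHamiltonianCycle) :
    Nat.card (SimpleGraph.induce B G).ConnectedComponent ≤ A.ncard := by
  classical
  obtain ⟨v, w, hw⟩ := ham
  set l := w.support.tail with hldef
  have hnodup : l.Nodup := hw.isCycle.support_nodup
  have hmem : ∀ x : V, x ∈ l := by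
    intro x
    have := hw.isHamiltonian_tail.mem_support x
    rwa [SimpleGraph.Walk.support_tail_of_not_nil w hw.isCycle.not_nil] at this
  set n := l.length with hndef
  have hln : l ≠ [] := List.ne_nil_of_mem (hmem v)
  have hn : 0 < n := List.length_pos_iff.mpr hln
  have hidx : ∀ m : ℕ, m % n < n := fun m => Nat.mod_lt _ hn
  let idx : ℕ → Fin n := fun m => ⟨m % n, hidx m⟩
  have hcover : ∀ x : V, x ∈ A ∨ x ∈ B := by
    intro x
    have : x ∈ A ∪ B := hunion ▸ Set.mem_univ x
    exact this
  -- the support of w is v :: l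
  have hsupp : w.support = v :: l := by
    rw [hldef, ← SimpleGraph.Walk.support_tail_of_not_nil w hw.isCycle.not_nil,
      SimpleGraph.Walk.cons_support_tail (p := w) hw.isCycle.not_nil]
  have hchain : List.Chain' (H ⊔ G).Adj (v :: l) := by
    have := w.isChain_adj_support
    rwa [hsupp] at this
  -- last element of l is v
  have hlast : l.get ⟨n - 1, by omega⟩ = v := by
    have h1 : (v :: l).getLast (List.cons_ne_nil v l) = v := by
      have h2 := w.getLast_support
      simp only [hsupp] at h2
      exact h2
    rw [List.getLast_cons hln] at h1
    rw [List.getLast_eq_getElem] at h1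
    simpa using h1
  -- cyclic adjacency
  have hadj : ∀ i : Fin n, (H ⊔ G).Adj (l.get i) (l.get (idx (i + 1))) := by
    intro i
    have hch := List.isChain_iff_getElem.mp (hchain.tail : List.Chain' (H ⊔ G).Adj l)
    rcases Nat.lt_or_ge ((i : ℕ) + 1) n with h | h
    · have e : idx ((i : ℕ) + 1) = ⟨(i : ℕ) + 1, h⟩ := Fin.ext (Nat.mod_eq_of_lt h)
      rw [e]
      exact hch i (by simp only [List.tail_cons]; omega)
    · have he : (i : ℕ) + 1 = n := by have := i.2; omega
      have e : idx ((i : ℕ) + 1) = ⟨0, hn⟩ := Fin.ext (by rw [he]; exact Nat.mod_self n)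
      rw [e]
      have hv : l.get i = v := by
        rw [show i = (⟨n - 1, by omega⟩ : Fin n) from Fin.ext (show (i:ℕ) = n - 1 by omega)]; exact hlast
      rw [hv]
      exact List.isChain_iff_getElem.mp hchain 0 (by simpa using hn)
  -- successor on indices
  have hsucc : ∀ m : ℕ, idx ((idx m : ℕ) + 1) = idx (m + 1) := by
    intro m
    apply Fin.ext
    show ((m % n) + 1) % n = (m + 1) % n
    rw [Nat.mod_add_mod]
  have hsuccinj : ∀ m m' : ℕ, idx (m + 1) = idx (m' + 1) → idx m = idx m' := by
    intro m m' h
    have h1 : ((m % n) + 1) % n = ((m' % n) + 1) % n := by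
      have h2 : (m + 1) % n = (m' + 1) % n := congrArg Fin.val h
      rwa [Nat.mod_add_mod, Nat.mod_add_mod]
    have h2 : m % n < n := hidx m
    have h3 : m' % n < n := hidx m'
    have e1 : ((m % n) + 1) % n = if m % n + 1 = n then 0 else m % n + 1 := by
      split
      next h' => rw [h']; exact Nat.mod_self n
      next _ => exact Nat.mod_eq_of_lt (by omega)
    have e2 : ((m' % n) + 1) % n = if m' % n + 1 = n then 0 else m' % n + 1 := by
      split
      next h' => rw [h']; exact Nat.mod_self n
      next _ => exact Nat.mod_eq_of_lt (by omega)
    apply Fin.ext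
    show m % n = m' % n
    rw [e1, e2] at h1
    split at h1 <;> split at h1 <;> omega
  -- runs inside B are connected in the induced graph
  have key : ∀ (k j : ℕ), (∀ t, t ≤ k → l.get (idx (j + t)) ∈ B) →
      ∀ (h0 : l.get (idx j) ∈ B) (hk : l.get (idx (j + k)) ∈ B),
      (SimpleGraph.induce B G).Reachable ⟨l.get (idx j), h0⟩ ⟨l.get (idx (j + k)), hk⟩ := by
    intro k
    induction k with
    | zero => intro j _ h0 hk; exact SimpleGraph.Reachable.refl _
    | succ k ih =>
      intro j hB h0 hk
      have hbk : l.get (idx (j + k)) ∈ B := hB k (Nat.le_succ k)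
      refine (ih j (fun t ht => hB t (le_trans ht (Nat.le_succ k))) h0 hbk).trans
        (SimpleGraph.Adj.reachable ?_)
      have ha := hadj (idx (j + k))
      rw [hsucc (j + k)] at ha
      have hb2 : l.get (idx (j + (k + 1))) ∈ B := hk
      rcases (SimpleGraph.sup_adj _ _ _ _).mp ha with hH' | hG'
      · exfalso
        rcases (hH _ _).mp hH' with ⟨h1, _⟩ | ⟨_, h2⟩
        · exact Set.disjoint_left.mp hdisj h1 hbk
        · exact Set.disjoint_left.mp hdisj h2 hb2
      · exact hG'
  -- existence of an A-vertex ahead of any index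
  obtain ⟨a0, ha0⟩ := hA
  have hi0 : List.idxOf a0 l < n := List.idxOf_lt_length_iff.mpr (hmem a0)
  have hex : ∀ j : ℕ, ∃ k, l.get (idx (j + k)) ∈ A := by
    intro j
    refine ⟨n + List.idxOf a0 l - j % n, ?_⟩
    have h1 := Nat.div_add_mod j n
    have h2 : j % n < n := hidx j
    have h5 : n * (j / n + 1) = n * (j / n) + n := by ring
    have h3 : j + (n + List.idxOf a0 l - j % n) = n * (j / n + 1) + List.idxOf a0 l := by
      omega
    have h4 : (j + (n + List.idxOf a0 l - j % n)) % n = List.idxOf a0 l := by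
      rw [h3, Nat.mul_add_mod, Nat.mod_eq_of_lt hi0]
    have : idx (j + (n + List.idxOf a0 l - j % n)) = ⟨List.idxOf a0 l, hi0⟩ :=
      Fin.ext h4
    rw [this, List.idxOf_get]
    exact ha0
  -- data for each vertex of B
  have hj : ∀ b : ↥B, List.idxOf (b : V) l < n :=
    fun b => List.idxOf_lt_length_iff.mpr (hmem b)
  let jdx : ↥B → ℕ := fun b => List.idxOf (b : V) l
  let K : ↥B → ℕ := fun b => Nat.find (hex (jdx b))
  have hK : ∀ b, l.get (idx (jdx b + K b)) ∈ A := fun b => Nat.find_spec (hex (jdx b))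
  have hget0 : ∀ b : ↥B, l.get (idx (jdx b)) = (b : V) := by
    intro b
    have : idx (jdx b) = ⟨jdx b, hj b⟩ := Fin.ext (Nat.mod_eq_of_lt (hj b))
    rw [this]
    exact List.idxOf_get _
  have hKpos : ∀ b, 0 < K b := by
    intro b
    rcases Nat.eq_zero_or_pos (K b) |>.symm with h | h
    · exact h
    · exfalso
      have := hK b
      rw [h, Nat.add_zero, hget0 b] at this
      exact Set.disjoint_left.mp hdisj this b.2
  have hKB : ∀ b, ∀ t, t < K b → l.get (idx (jdx b + t)) ∈ B := by
    intro b t ht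
    rcases hcover (l.get (idx (jdx b + t))) with h | h
    · exact absurd h (Nat.find_min (hex (jdx b)) ht)
    · exact h
  -- the injection
  let f : (SimpleGraph.induce B G).ConnectedComponent → ↥A :=
    fun C => ⟨l.get (idx (jdx C.out + K C.out)), hK C.out⟩
  -- each component is the component of its "predecessor" vertex
  have hrep : ∀ C : (SimpleGraph.induce B G).ConnectedComponent,
      ∀ (h : l.get (idx (jdx C.out + (K C.out - 1))) ∈ B),
      (SimpleGraph.induce B G).connectedComponentMk
        ⟨l.get (idx (jdx C.out + (K C.out - 1))), h⟩ = C := by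
    intro C h
    set b := C.out with hb
    have h0 : l.get (idx (jdx b)) ∈ B := by rw [hget0 b]; exact b.2
    have hr := key (K b - 1) (jdx b)
      (fun t ht => hKB b t (by have := hKpos b; omega)) h0 h
    have h1 : (⟨l.get (idx (jdx b)), h0⟩ : ↥B) = b := Subtype.ext (hget0 b)
    rw [h1] at hr
    have h2 := SimpleGraph.ConnectedComponent.sound hr.symm
    rw [h2]
    exact C.out_eq
  have hinj : Function.Injective f := by
    intro C C' hCC'
    have hval : l.get (idx (jdx C.out + K C.out)) = l.get (idx (jdx C'.out + K C'.out)) :=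
      congrArg Subtype.val hCC'
    have hidxeq : idx (jdx C.out + K C.out) = idx (jdx C'.out + K C'.out) :=
      (List.Nodup.get_inj_iff hnodup).mp hval
    have hpred : idx (jdx C.out + (K C.out - 1)) = idx (jdx C'.out + (K C'.out - 1)) := by
      apply hsuccinj
      have e1 : jdx C.out + (K C.out - 1) + 1 = jdx C.out + K C.out := by
        have := hKpos C.out; omega
      have e2 : jdx C'.out + (K C'.out - 1) + 1 = jdx C'.out + K C'.out := by
        have := hKpos C'.out; omega
      rw [e1, e2]; exact hidxeq
    have hB1 : l.get (idx (jdx C.out + (K C.out - 1))) ∈ B :=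
      hKB C.out _ (by have := hKpos C.out; omega)
    have hB2 : l.get (idx (jdx C'.out + (K C'.out - 1))) ∈ B :=
      hKB C'.out _ (by have := hKpos C'.out; omega)
    have hveq : l.get (idx (jdx C.out + (K C.out - 1)))
        = l.get (idx (jdx C'.out + (K C'.out - 1))) := by rw [hpred]
    calc C = (SimpleGraph.induce B G).connectedComponentMk
            ⟨l.get (idx (jdx C.out + (K C.out - 1))), hB1⟩ := (hrep C hB1).symm
      _ = (SimpleGraph.induce B G).connectedComponentMk
            ⟨l.get (idx (jdx C'.out + (K C'.out - 1))), hB2⟩ := by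
            congr 1; exact Subtype.ext hveq
      _ = C' := hrep C' hB2
  calc Nat.card (SimpleGraph.induce B G).ConnectedComponent
      ≤ Nat.card ↥A := Nat.card_le_card_of_injective f hinj
    _ = A.ncard := Nat.card_coe_set_eq A
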